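/- Let n be even. Then the sum of absolute values of the middle column of the Krawtchouk matrix satisfies Σ_{i=0}^{n} |K_i(n/2, n)| = 2^{n/2}. -/

import Mathlib

open Finset Polynomial

def K (i k n : ℕ) : ℤ :=
  ∑ j ∈ Finset.range (i + 1), (-1) ^ j * (Nat.choose k j) * (Nat.choose (n - k) (i - j))

lemma coeff_one_sub_X_pow (k j : ℕ) :
    ((1 - X : ℤ[X]) ^ k).coeff j = (-1) ^ j * k.choose j := by
  have h1 : (1 - X : ℤ[X]) ^ k = C ((-1) ^ k) * (X + C (-1)) ^ k := by
    rw [map_pow, ← mul_pow]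
    congr 1
    rw [C_neg, C_1]
    ring
  rw [h1, coeff_C_mul, coeff_X_add_C_pow]
  rcases le_or_gt j k with h | h
  · have : ((-1:ℤ)) ^ k * (-1) ^ (k - j) = (-1) ^ j := by
      rw [← pow_add]
      have h2 : k + (k - j) = j + 2 * (k - j) := by omega
      rw [h2, pow_add, pow_mul]
      simp
    rw [← mul_assoc, this]
  · simp [Nat.choose_eq_zero_of_lt h]

lemma K_eq_coeff (i m : ℕ) :
    K i m (2 * m) = (((1 - X) ^ m * (1 + X) ^ m : ℤ[X])).coeff i := by
  rw [coeff_mul, Finset.Nat.sum_antidiagonal_eq_sum_range_succ_mk]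
  unfold K
  apply Finset.sum_congr rfl
  intro j hj
  rw [coeff_one_sub_X_pow, coeff_one_add_X_pow]
  have h : 2 * m - m = m := by omega
  rw [h]

lemma myexpand (m : ℕ) :
    ((1 - X) ^ m * (1 + X) ^ m : ℤ[X]) =
      ∑ t ∈ Finset.range (m + 1), C ((-1 : ℤ) ^ t * m.choose t) * X ^ (2 * t) := by
  have h1 : ((1 - X) ^ m * (1 + X) ^ m : ℤ[X]) = (-(X^2) + 1) ^ m := by
    rw [← mul_pow]; congr 1; ring
  rw [h1, add_pow]
  apply Finset.sum_congr rfl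
  intro t ht
  rw [neg_pow, ← pow_mul]
  simp only [map_mul, map_pow, C_neg, C_1, map_natCast]
  ring

lemma coeff_eq (m i : ℕ) :
    (((1 - X) ^ m * (1 + X) ^ m : ℤ[X])).coeff i =
      ∑ t ∈ Finset.range (m + 1), if 2 * t = i then (-1 : ℤ) ^ t * m.choose t else 0 := by
  rw [myexpand, finset_sum_coeff]
  apply Finset.sum_congr rfl
  intro t ht
  rw [coeff_C_mul, coeff_X_pow]
  rcases eq_or_ne (2 * t) i with h | h
  · simp [h]
  · simp [h, Ne.symm h]

theorem stmt8 (n : ℕ) (hn : Even n) (hpos : 0 < n) :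
    ∑ i ∈ Finset.range (n + 1), |K i (n / 2) n| = 2 ^ (n / 2) := by
  obtain ⟨m, hm⟩ := hn
  have hn2 : n = 2 * m := by omega
  have hhalf : n / 2 = m := by omega
  subst hn2
  rw [hhalf]
  have key : ∀ i, K i m (2 * m) =
      ∑ t ∈ Finset.range (m + 1), if 2 * t = i then (-1 : ℤ) ^ t * m.choose t else 0 := by
    intro i; rw [K_eq_coeff, coeff_eq]
  -- sum over range(2m+1) equals sum over even indices
  have himg : (Finset.range (m + 1)).image (fun t => 2 * t) ⊆ Finset.range (2 * m + 1) := by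
    intro x hx
    simp only [Finset.mem_image, Finset.mem_range] at hx ⊢
    obtain ⟨t, ht, rfl⟩ := hx
    omega
  rw [← Finset.sum_subset himg ?_]
  · rw [Finset.sum_image (by intro a _ b _ h; simp only at h; omega)]
    have : ∀ t ∈ Finset.range (m + 1), |K (2 * t) m (2 * m)| = (m.choose t : ℤ) := by
      intro t ht
      rw [key]
      rw [Finset.sum_eq_single t]
      · rw [if_pos rfl, abs_mul, abs_pow]
        simp
      · intro b _ hb
        simp [Nat.mul_left_cancel, (by omega : 2 * b = 2 * t ↔ b = t).not.mpr hb]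
      · intro h; exact absurd ht h
    rw [Finset.sum_congr rfl this]
    rw [← Nat.cast_sum]
    rw [Nat.sum_range_choose]
    push_cast
    ring
  · intro i hi hni
    rw [key]
    have : ∀ t ∈ Finset.range (m + 1), (if 2 * t = i then (-1 : ℤ) ^ t * m.choose t else 0) = 0 := by
      intro t ht
      rw [if_neg]
      intro h
      apply hni
      simp only [Finset.mem_image, Finset.mem_range] at *
      exact ⟨t, ht, h⟩
    rw [Finset.sum_congr rfl this, Finset.sum_const_zero]
    simp
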